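/- For every natural number n and every real x, lim_{s→∞} s^{−n/2} P_n^{(s,s)}(x/√s) = H_n(x)/(2^n n!), where P_n^{(α,β)} is the Jacobi polynomial and H_n is the (physicists') Hermite polynomial. -/

import Mathlib

/-- The Jacobi polynomial `P_n^{(a,b)}(x)`, via its standard finite-sum formula. -/
noncomputable def jacobiP (a b : ℝ) (n : ℕ) (x : ℝ) : ℝ :=
  ∑ s ∈ Finset.range (n + 1),
    Ring.choose (a + n) (n - s) * Ring.choose (b + n) s *
      ((x - 1) / 2) ^ s * ((x + 1) / 2) ^ (n - s)

/-- The physicists' Hermite polynomials, via their recurrence. -/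
noncomputable def hermiteH : ℕ → ℝ → ℝ
  | 0 => fun _ => 1
  | 1 => fun x => 2 * x
  | (n + 2) => fun x => 2 * x * hermiteH (n + 1) x - 2 * (n + 1) * hermiteH n x

open Finset Filter


lemma descPoch_smeval_prod (r : ℝ) (m : ℕ) :
    (descPochhammer ℤ m).smeval r = ∏ j ∈ range m, (r - j) := by
  induction m with
  | zero => simp [descPochhammer_zero]
  | succ m ih =>
    rw [descPochhammer_succ_right, Polynomial.smeval_mul, ih, prod_range_succ,
      Polynomial.smeval_sub, Polynomial.smeval_X, Polynomial.smeval_natCast]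
    norm_num

lemma ring_choose_eq_prod (r : ℝ) (m : ℕ) :
    Ring.choose r m = (∏ j ∈ range m, (r - j)) / m.factorial := by
  have h := Ring.descPochhammer_eq_factorial_smul_choose r m
  rw [descPoch_smeval_prod, nsmul_eq_mul] at h
  have hm : (m.factorial : ℝ) ≠ 0 := by exact_mod_cast m.factorial_ne_zero
  rw [h, mul_comm, mul_div_assoc, div_self hm, mul_one]

lemma diamond (z : ℝ) (n k : ℕ) (hk : k ≤ n) :
    Ring.choose z k * Ring.choose z (n - k) =
      ∑ q ∈ range (min k (n - k) + 1),
        Ring.choose z (n - q) * ((n - q).choose q : ℝ) * ((n - 2*q).choose (k - q) : ℝ) := by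
  have key : ∀ q ∈ range (min k (n - k) + 1),
      Ring.choose z (n - q) * ((n - q).choose q : ℝ) * ((n - 2*q).choose (k - q) : ℝ)
        = (k.choose q : ℝ) * (Ring.choose z k * Ring.choose (z - k) (n - k - q)) := by
    intro q hq
    rw [mem_range] at hq
    have hqk : q ≤ k := le_trans (Nat.lt_succ_iff.mp hq) (min_le_left _ _)
    have hqnk : q ≤ n - k := le_trans (Nat.lt_succ_iff.mp hq) (min_le_right _ _)
    have h2q : 2*q ≤ n := by omega
    have h1 := Ring.choose_smul_choose z (n := n - q) (k := q) (by omega)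
    have h2 := Ring.choose_smul_choose (z - q) (n := n - 2*q) (k := k - q) (by omega)
    have h3 := Ring.choose_smul_choose z (n := k) (k := q) hqk
    rw [nsmul_eq_mul] at h1 h2 h3
    have e1 : n - q - q = n - 2*q := by omega
    rw [e1] at h1
    have e2 : (z - q) - ((k - q : ℕ) : ℝ) = z - k := by
      have : ((k - q : ℕ) : ℝ) = (k : ℝ) - q := by push_cast [hqk]; ring
      rw [this]; ring
    have e3 : n - 2*q - (k - q) = n - k - q := by omega
    rw [e2, e3] at h2
    calc Ring.choose z (n - q) * ((n - q).choose q : ℝ) * ((n - 2*q).choose (k - q) : ℝ)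
        = (((n - q).choose q : ℝ) * Ring.choose z (n - q)) * ((n - 2*q).choose (k - q) : ℝ) := by
          ring
      _ = (Ring.choose z q * Ring.choose (z - q) (n - 2*q)) * ((n - 2*q).choose (k - q) : ℝ) := by
          rw [h1]
      _ = Ring.choose z q * (((n - 2*q).choose (k - q) : ℝ) * Ring.choose (z - q) (n - 2*q)) := by
          ring
      _ = Ring.choose z q * (Ring.choose (z - q) (k - q) * Ring.choose (z - k) (n - k - q)) := by
          rw [h2]
      _ = (Ring.choose z q * Ring.choose (z - q) (k - q)) * Ring.choose (z - k) (n - k - q) := by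
          ring
      _ = (k.choose q : ℝ) * (Ring.choose z k * Ring.choose (z - k) (n - k - q)) := by
          rw [← h3]; ring
  rw [sum_congr rfl key]
  have vand := Ring.add_choose_eq (r := (k : ℝ)) (s := z - k) (n - k) (Commute.all _ _)
  rw [Finset.Nat.sum_antidiagonal_eq_sum_range_succ_mk] at vand
  have hz : (k : ℝ) + (z - k) = z := by ring
  rw [hz] at vand
  have vand2 : Ring.choose z (n - k) =
      ∑ i ∈ range (min k (n - k) + 1), (k.choose i : ℝ) * Ring.choose (z - k) (n - k - i) := by
    rw [vand]
    rw [← sum_subset (s₁ := range (min k (n - k) + 1))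
      (by intro i hi; rw [mem_range] at *; omega)]
    · exact sum_congr rfl fun i _ => by rw [Ring.choose_natCast]
    · intro i hi hni
      rw [mem_range] at hi hni
      have : k < i := by omega
      rw [Ring.choose_natCast]
      norm_cast
      rw [Nat.choose_eq_zero_of_lt this]
      ring
  rw [vand2, mul_sum]
  exact sum_congr rfl fun q _ => by ring

lemma star (a y : ℝ) (n : ℕ) :
    jacobiP a a n y = ∑ q ∈ range (n + 1),
      Ring.choose (a + n) (n - q) * ((n - q).choose q : ℝ) *
        (((y - 1) / 2) * ((y + 1) / 2)) ^ q * y ^ (n - 2*q) := by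
  set z := a + (n : ℝ) with hz
  set u := (y - 1) / 2 with hu
  set v := (y + 1) / 2 with hv
  have huv : u + v = y := by rw [hu, hv]; ring
  have hL : jacobiP a a n y =
      ∑ p ∈ (range (n + 1)).sigma (fun k => range (min k (n - k) + 1)),
        Ring.choose z (n - p.2) * ((n - p.2).choose p.2 : ℝ) *
          ((n - 2*p.2).choose (p.1 - p.2) : ℝ) * u ^ p.1 * v ^ (n - p.1) := by
    rw [jacobiP, sum_sigma]
    refine sum_congr rfl fun k hk => ?_
    rw [mem_range] at hk
    have hkn : k ≤ n := by omega
    have : Ring.choose z (n - k) * Ring.choose z k * u ^ k * v ^ (n - k)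
        = (Ring.choose z k * Ring.choose z (n - k)) * (u ^ k * v ^ (n - k)) := by ring
    rw [this, diamond z n k hkn, sum_mul]
    exact sum_congr rfl fun q _ => by ring
  have hR : (∑ q ∈ range (n + 1),
      Ring.choose z (n - q) * ((n - q).choose q : ℝ) * (u * v) ^ q * y ^ (n - 2*q)) =
      ∑ p ∈ (range (n + 1)).sigma (fun q => if 2*q ≤ n then range (n - 2*q + 1) else (∅ : Finset ℕ)),
        Ring.choose z (n - p.1) * ((n - p.1).choose p.1 : ℝ) *
          ((n - 2*p.1).choose p.2 : ℝ) * u ^ (p.1 + p.2) * v ^ (n - (p.1 + p.2)) := by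
    rw [sum_sigma]
    refine sum_congr rfl fun q hq => ?_
    rw [mem_range] at hq
    by_cases h2q : 2*q ≤ n
    · rw [if_pos h2q, ← huv, add_pow, mul_sum]
      refine sum_congr rfl fun j hj => ?_
      rw [mem_range] at hj
      have hj' : j ≤ n - 2*q := by omega
      have hexp : n - 2*q - j + q = n - (q + j) := by omega
      rw [mul_pow]
      have : u ^ q * v ^ q * (u ^ j * v ^ (n - 2*q - j) * ((n-2*q).choose j : ℝ))
          = ((n-2*q).choose j : ℝ) * (u ^ (q + j) * v ^ (n - (q + j))) := by
        rw [← hexp, pow_add, pow_add]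
        ring
      calc Ring.choose z (n - q) * ((n - q).choose q : ℝ) *
            (u ^ q * v ^ q) * (u ^ j * v ^ (n - 2*q - j) * ((n-2*q).choose j : ℝ))
          = Ring.choose z (n - q) * ((n - q).choose q : ℝ) *
            (u ^ q * v ^ q * (u ^ j * v ^ (n - 2*q - j) * ((n-2*q).choose j : ℝ))) := by ring
        _ = _ := by rw [this]; ring
    · have hc : (n - q).choose q = 0 := Nat.choose_eq_zero_of_lt (by omega)
      rw [if_neg h2q, sum_empty]
      simp [hc]
  rw [hL, hR]
  refine (sum_nbij' (fun p => (⟨p.2, p.1 - p.2⟩ : Σ _ : ℕ, ℕ))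
    (fun p => (⟨p.1 + p.2, p.1⟩ : Σ _ : ℕ, ℕ)) ?_ ?_ ?_ ?_ ?_)
  · rintro ⟨k, q⟩ hp
    simp only [mem_sigma, mem_range, Nat.lt_succ_iff, le_min_iff] at hp
    simp only [mem_sigma]
    refine ⟨mem_range.mpr (by omega), ?_⟩
    rw [if_pos (by omega : 2*q ≤ n)]
    exact mem_range.mpr (by omega)
  · rintro ⟨q, j⟩ hp
    simp only [mem_sigma, mem_range] at hp
    obtain ⟨hq, hj⟩ := hp
    by_cases h2q : 2*q ≤ n
    · rw [if_pos h2q, mem_range] at hj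
      simp only [mem_sigma, mem_range, Nat.lt_succ_iff, le_min_iff]
      omega
    · rw [if_neg h2q] at hj
      exact absurd hj (notMem_empty _)
  · rintro ⟨k, q⟩ hp
    simp only [mem_sigma, mem_range, Nat.lt_succ_iff, le_min_iff] at hp
    exact congrArg (fun m => (⟨m, q⟩ : Σ _ : ℕ, ℕ)) (by omega : q + (k - q) = k)
  · rintro ⟨q, j⟩ hp
    exact congrArg (fun m => (⟨q, m⟩ : Σ _ : ℕ, ℕ)) (by omega : q + j - q = j)
  · rintro ⟨k, q⟩ hp
    simp only [mem_sigma, mem_range, Nat.lt_succ_iff, le_min_iff] at hp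
    dsimp only
    rw [(by omega : q + (k - q) = k)]

lemma natkey (r q : ℕ) : (r + q + 2) * Nat.choose (r+1) (q+1)
    = (r+1) * (Nat.choose r (q+1) + 2 * Nat.choose r q) := by
  have h1 : (r+1) * r.choose q = (r+1).choose (q+1) * (q+1) := Nat.add_one_mul_choose_eq r q
  have h2 : (r+1).choose (q+1) = r.choose q + r.choose (q+1) := Nat.choose_succ_succ' r q
  calc (r + q + 2) * (r+1).choose (q+1)
      = (r+1).choose (q+1) * (q+1) + (r+1) * (r+1).choose (q+1) := by ring
    _ = (r+1) * r.choose q + (r+1) * (r.choose q + r.choose (q+1)) := by rw [← h1, ← h2]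
    _ = (r+1) * (r.choose (q+1) + 2 * r.choose q) := by ring

lemma claimA (m : ℕ) (x : ℝ) :
    ((m:ℝ)+2) * ∑ q ∈ range (m+3),
        (-1:ℝ)^q * ((m+2-q).choose q : ℝ) * x^(m+2-2*q) / (4^q * ((m+2-q).factorial : ℝ))
    = x * (∑ q ∈ range (m+2),
        (-1:ℝ)^q * ((m+1-q).choose q : ℝ) * x^(m+1-2*q) / (4^q * ((m+1-q).factorial : ℝ)))
      - (∑ q ∈ range (m+1),
        (-1:ℝ)^q * ((m-q).choose q : ℝ) * x^(m-2*q) / (4^q * ((m-q).factorial : ℝ))) / 2 := by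
  have key : ∀ q ∈ range (m+1),
      ((m:ℝ)+2) * ((-1:ℝ)^(q+1) * ((m+2-(q+1)).choose (q+1) : ℝ) * x^(m+2-2*(q+1))
          / (4^(q+1) * ((m+2-(q+1)).factorial : ℝ)))
      = x * ((-1:ℝ)^(q+1) * ((m+1-(q+1)).choose (q+1) : ℝ) * x^(m+1-2*(q+1))
          / (4^(q+1) * ((m+1-(q+1)).factorial : ℝ)))
        - ((-1:ℝ)^q * ((m-q).choose q : ℝ) * x^(m-2*q) / (4^q * ((m-q).factorial : ℝ))) / 2 := by
    intro q hq
    rw [mem_range, Nat.lt_succ_iff] at hq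
    rcases lt_trichotomy (2*q) m with hlt | heq | hgt
    · -- 2*q < m
      obtain ⟨d, hd⟩ : ∃ d, m = 2*q + d + 1 := ⟨m - 2*q - 1, by omega⟩
      have e1 : m + 2 - (q+1) = (q+d+1) + 1 := by omega
      have e2 : m + 1 - (q+1) = q+d+1 := by omega
      have e3 : m - q = q+d+1 := by omega
      have e4 : m + 2 - 2*(q+1) = d+1 := by omega
      have e5 : m + 1 - 2*(q+1) = d := by omega
      have e6 : m - 2*q = d+1 := by omega
      have ecast : (m:ℝ) = 2*(q:ℝ) + (d:ℝ) + 1 := by exact_mod_cast congrArg (Nat.cast (R := ℝ)) hd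
      rw [e1, e2, e3, e4, e5, e6, ecast]
      have hkr : ((q:ℝ) + d + 1 + q + 2) * ((q+d+1+1).choose (q+1) : ℝ)
          = ((q:ℝ) + d + 1 + 1) * (((q+d+1).choose (q+1) : ℝ) + 2 * ((q+d+1).choose q : ℝ)) := by
        exact_mod_cast natkey (q+d+1) q
      have hfac : ((q+d+1+1).factorial : ℝ) = ((q:ℝ)+d+2) * ((q+d+1).factorial : ℝ) := by
        rw [Nat.factorial_succ]; push_cast; ring
      have hfacne : ((q+d+1).factorial : ℝ) ≠ 0 := by exact_mod_cast (q+d+1).factorial_ne_zero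
      rw [hfac]
      have hC1 : ((q+d+1+1).choose (q+1) : ℝ) = ((q:ℝ) + d + 1 + 1) * (((q+d+1).choose (q+1) : ℝ)
          + 2 * ((q+d+1).choose q : ℝ)) / ((q:ℝ) + d + 1 + q + 2) := by
        rw [eq_div_iff (by positivity)]
        linear_combination hkr
      rw [hC1]
      field_simp
      ring
    · -- 2*q = m
      have e1 : m + 2 - (q+1) = q + 1 := by omega
      have e2 : m + 1 - (q+1) = q := by omega
      have e3 : m - q = q := by omega
      have e4 : m + 2 - 2*(q+1) = 0 := by omega
      have e5 : m + 1 - 2*(q+1) = 0 := by omega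
      have e6 : m - 2*q = 0 := by omega
      have ecast : (m:ℝ) = 2*(q:ℝ) := by exact_mod_cast congrArg (Nat.cast (R := ℝ)) heq.symm
      rw [e1, e2, e3, e4, e5, e6, ecast]
      rw [Nat.choose_self, Nat.choose_succ_self, Nat.choose_self]
      have hfac : ((q+1).factorial : ℝ) = ((q:ℝ)+1) * (q.factorial : ℝ) := by
        rw [Nat.factorial_succ]; push_cast; ring
      have hfacne : (q.factorial : ℝ) ≠ 0 := by exact_mod_cast q.factorial_ne_zero
      rw [hfac]
      push_cast
      field_simp
      ring
    · -- 2*q > m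
      have c1 : (m+2-(q+1)).choose (q+1) = 0 := Nat.choose_eq_zero_of_lt (by omega)
      have c2 : (m+1-(q+1)).choose (q+1) = 0 := Nat.choose_eq_zero_of_lt (by omega)
      have c3 : (m-q).choose q = 0 := Nat.choose_eq_zero_of_lt (by omega)
      rw [c1, c2, c3]
      push_cast
      ring
  rw [mul_sum, Finset.sum_range_succ', Finset.sum_range_succ]
  have hz2 : ((m:ℝ)+2) * ((-1:ℝ)^((m+1)+1) * ((m+2-((m+1)+1)).choose ((m+1)+1) : ℝ)
      * x^(m+2-2*((m+1)+1)) / (4^((m+1)+1) * ((m+2-((m+1)+1)).factorial : ℝ))) = 0 := by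
    have h0 : m+2-((m+1)+1) = 0 := by omega
    rw [h0, Nat.choose_eq_zero_of_lt (by omega)]
    push_cast; ring
  rw [hz2, add_zero, sum_congr rfl key, Finset.sum_sub_distrib]
  rw [Finset.sum_range_succ' (fun q => (-1:ℝ)^q * ((m+1-q).choose q : ℝ) * x^(m+1-2*q)
      / (4^q * ((m+1-q).factorial : ℝ))) (m+1)]
  have hF0 : ((m:ℝ)+2) * ((-1:ℝ)^0 * ((m+2-0).choose 0 : ℝ) * x^(m+2-2*0)
      / (4^0 * ((m+2-0).factorial : ℝ)))
      = x * ((-1:ℝ)^0 * ((m+1-0).choose 0 : ℝ) * x^(m+1-2*0)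
      / (4^0 * ((m+1-0).factorial : ℝ))) := by
    simp only [Nat.sub_zero, Nat.mul_zero, Nat.choose_zero_right, pow_zero]
    have hf2 : ((m+2).factorial : ℝ) = ((m:ℝ)+2) * ((m+1).factorial : ℝ) := by
      rw [Nat.factorial_succ]; push_cast; ring
    have hne : ((m+1).factorial : ℝ) ≠ 0 := by exact_mod_cast (m+1).factorial_ne_zero
    have hx : x^(m+2) = x * x^(m+1) := by rw [pow_succ]; ring
    rw [hf2, hx]
    field_simp
  rw [mul_add, mul_sum, Finset.sum_div]
  linear_combination hF0

lemma hermite_sum (n : ℕ) (x : ℝ) :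
    hermiteH n x = 2^n * (n.factorial : ℝ) *
      ∑ q ∈ range (n+1),
        (-1:ℝ)^q * ((n-q).choose q : ℝ) * x^(n-2*q) / (4^q * ((n-q).factorial : ℝ)) := by
  induction n using Nat.strong_induction_on with
  | _ n ih =>
    match n, ih with
    | 0, _ => simp [hermiteH]
    | 1, _ =>
      show 2 * x = _
      rw [Finset.sum_range_succ, Finset.sum_range_succ]
      norm_num
    | (m+2), ih =>
      have hrec : hermiteH (m+2) x = 2*x*hermiteH (m+1) x - 2*((m:ℝ)+1)*hermiteH m x := by
        simp only [hermiteH]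
        try push_cast
        try ring
      rw [hrec, ih (m+1) (by omega), ih m (by omega)]
      have hA := claimA m x
      have hf2 : ((m+2).factorial : ℝ) = ((m:ℝ)+2) * ((m+1).factorial : ℝ) := by
        rw [Nat.factorial_succ]; push_cast; ring
      have hf1 : ((m+1).factorial : ℝ) = ((m:ℝ)+1) * (m.factorial : ℝ) := by
        rw [Nat.factorial_succ]; push_cast; ring
      rw [hf2, hf1]
      linear_combination (-(2:ℝ)^(m+2) * ((m:ℝ)+1) * (m.factorial : ℝ)) * hA

lemma tendsto_rc (c : ℝ) (m : ℕ) :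
    Tendsto (fun s : ℝ => Ring.choose (s + c) m * s ^ (-(m : ℝ)))
      atTop (nhds ((m.factorial : ℝ))⁻¹) := by
  have h1 : Tendsto (fun s : ℝ => (∏ j ∈ range m, (1 + (c - j) * s⁻¹)) / (m.factorial : ℝ))
      atTop (nhds ((∏ j ∈ range m, (1:ℝ)) / (m.factorial : ℝ))) := by
    refine Tendsto.div_const (tendsto_finset_prod _ (fun j _ => ?_)) _
    have := (tendsto_inv_atTop_zero (𝕜 := ℝ)).const_mul (c - j)
    have h2 := this.const_add (1:ℝ)
    simpa using h2
  rw [prod_const_one, one_div] at h1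
  refine h1.congr' ?_
  filter_upwards [eventually_gt_atTop (0:ℝ)] with s hs
  rw [ring_choose_eq_prod, Real.rpow_neg hs.le, Real.rpow_natCast]
  have hsne : s ≠ 0 := ne_of_gt hs
  rw [div_mul_eq_mul_div]
  congr 1
  have hsm : (s^m)⁻¹ = ∏ _j ∈ range m, s⁻¹ := by
    rw [prod_const, card_range, inv_pow]
  rw [hsm, ← prod_mul_distrib]
  refine prod_congr rfl fun j _ => ?_
  field_simp
  ring

/-- In the strong-coupling limit, Jacobi polynomials degenerate to Hermite ones. -/
theorem jacobi_tendsto_hermite (n : ℕ) (x : ℝ) :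
    Filter.Tendsto (fun s : ℝ => s ^ (-(n : ℝ) / 2) * jacobiP s s n (x / Real.sqrt s))
      Filter.atTop (nhds (hermiteH n x / (2 ^ n * n.factorial))) := by
  have hval : hermiteH n x / (2 ^ n * (n.factorial : ℝ)) =
      ∑ q ∈ range (n+1),
        (-1:ℝ)^q * ((n-q).choose q : ℝ) * x^(n-2*q) / (4^q * ((n-q).factorial : ℝ)) := by
    rw [hermite_sum n x]
    have hne : (2:ℝ)^n * (n.factorial : ℝ) ≠ 0 := by positivity
    exact mul_div_cancel_left₀ _ hne
  rw [hval]
  have hterm : ∀ q ∈ range (n+1),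
      Tendsto (fun s : ℝ => Ring.choose (s + (n:ℝ)) (n - q) * s ^ (-(((n - q : ℕ)) : ℝ))
          * ((n-q).choose q : ℝ) * ((x^2 * s⁻¹ - 1)/4)^q * x^(n-2*q))
        atTop (nhds ((-1:ℝ)^q * ((n-q).choose q : ℝ) * x^(n-2*q)
          / (4^q * ((n-q).factorial : ℝ)))) := by
    intro q hq
    have T1 := tendsto_rc (n : ℝ) (n - q)
    have T2 : Tendsto (fun s : ℝ => ((x^2 * s⁻¹ - 1)/4)^q) atTop (nhds ((-1/4 : ℝ)^q)) := by
      have h0 : Tendsto (fun s : ℝ => (x^2 * s⁻¹ - 1)/4) atTop (nhds ((-1 : ℝ)/4)) := by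
        have := ((tendsto_inv_atTop_zero (𝕜 := ℝ)).const_mul (x^2)).sub_const (1:ℝ)
        have h2 := this.div_const (4:ℝ)
        simpa using h2
      exact h0.pow q
    have T3 := ((T1.mul_const ((n-q).choose q : ℝ)).mul T2).mul_const (x^(n-2*q))
    have hvq : ((n-q).factorial : ℝ)⁻¹ * ((n-q).choose q : ℝ) * (-1/4 : ℝ)^q * x^(n-2*q)
        = (-1:ℝ)^q * ((n-q).choose q : ℝ) * x^(n-2*q) / (4^q * ((n-q).factorial : ℝ)) := by
      rw [div_pow]
      ring
    rwa [hvq] at T3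
  refine (tendsto_finset_sum (range (n+1)) hterm).congr' ?_
  filter_upwards [eventually_gt_atTop (0:ℝ)] with s hs
  rw [star s (x / Real.sqrt s) n, mul_sum]
  refine sum_congr rfl fun q hq => ?_
  rw [mem_range, Nat.lt_succ_iff] at hq
  by_cases hq2 : 2*q ≤ n
  · have hy2 : (x / Real.sqrt s)^2 = x^2 * s⁻¹ := by
      rw [div_pow, Real.sq_sqrt hs.le, div_eq_mul_inv]
    have ha : ((x / Real.sqrt s - 1)/2) * ((x / Real.sqrt s + 1)/2) = (x^2 * s⁻¹ - 1)/4 := by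
      rw [← hy2]; ring
    have h1 : (Real.sqrt s)^(n-2*q) = s ^ ((((n-2*q : ℕ)):ℝ)/2) := by
      rw [Real.sqrt_eq_rpow, ← Real.rpow_natCast (s ^ ((1:ℝ)/2)) (n-2*q), ← Real.rpow_mul hs.le]
      congr 1
      ring
    have h2 : s ^ (-(n:ℝ)/2) * s ^ (-((((n-2*q : ℕ)):ℝ)/2)) = s ^ (-(((n-q : ℕ)):ℝ)) := by
      rw [← Real.rpow_add hs]
      congr 1
      push_cast [Nat.cast_sub hq2, Nat.cast_sub (show q ≤ n from hq)]
      ring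
    have hpow : s ^ (-(n:ℝ)/2) * (x / Real.sqrt s)^(n-2*q)
        = x^(n-2*q) * s ^ (-(((n-q : ℕ)):ℝ)) := by
      have h3 : x^(n-2*q) / s ^ ((((n-2*q : ℕ)):ℝ)/2) = x^(n-2*q) * s ^ (-((((n-2*q : ℕ)):ℝ)/2)) := by
        rw [Real.rpow_neg hs.le]
        ring
      rw [div_pow, h1, h3]
      linear_combination x^(n-2*q) * h2
    rw [ha]
    linear_combination (-(Ring.choose (s + (n:ℝ)) (n-q) * ((n-q).choose q : ℝ)
      * ((x^2*s⁻¹ - 1)/4)^q)) * hpow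
  · have hc : (n-q).choose q = 0 := Nat.choose_eq_zero_of_lt (by omega)
    rw [hc]
    simp
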